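/- Let g be an 8-dimensional nilpotent Lie algebra with strongly non-nilpotent complex structure J belonging to Family I, i.e., admitting a (1,0)-basis {ω¹,…,ω⁴} with dω¹ = 0, dω² = ε ω^{1 1̄}, dω³ = ω¹⁴ + ω^{1 4̄} + a ω^{2 1̄} + iδεb ω^{1 2̄}, dω⁴ = iν ω^{1 1̄} + b ω^{2 2̄} + iδ(ω^{1 3̄} − ω^{3 1̄}), where δ = ±1, ε, ν ∈ {0,1} and (a,b) ∈ ℝ² ∖ {(0,0)} with a ≥ 0. Then (g,J) does not admit any pseudo-Kähler structure. -/

import Mathlib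

noncomputable section

open Complex Module
open scoped TensorProduct

namespace Paper

/-- The ascending central series of a real Lie algebra. -/
def ascSeries (g : Type*) [LieRing g] [LieAlgebra ℝ g] : ℕ → Submodule ℝ g
  | 0 => ⊥
  | k + 1 =>
    { carrier := {X : g | ∀ Y : g, ⁅X, Y⁆ ∈ ascSeries g k}
      add_mem' := fun ha hb Y => by
        rw [add_lie]; exact Submodule.add_mem _ (ha Y) (hb Y)
      zero_mem' := fun Y => by rw [zero_lie]; exact Submodule.zero_mem _
      smul_mem' := fun c x hx Y => by rw [smul_lie]; exact Submodule.smul_mem _ c (hx Y) }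

/-- A Lie algebra is nilpotent when its ascending central series reaches the whole algebra. -/
def IsNilpotentLie (g : Type*) [LieRing g] [LieAlgebra ℝ g] : Prop :=
  ∃ s : ℕ, ascSeries g s = ⊤

/-- A (integrable) complex structure on a real Lie algebra. -/
structure ComplexStructure (g : Type*) [LieRing g] [LieAlgebra ℝ g] where
  J : g →ₗ[ℝ] g
  j_sq : ∀ X : g, J (J X) = -X
  integrable : ∀ X Y : g, ⁅X, Y⁆ + J ⁅J X, Y⁆ + J ⁅X, J Y⁆ - ⁅J X, J Y⁆ = 0

namespace ComplexStructure

variable {g g' : Type*} [LieRing g] [LieAlgebra ℝ g] [LieRing g'] [LieAlgebra ℝ g']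

/-- The ascending `J`-compatible series `a_k(J)`. -/
def aSeries (Jc : ComplexStructure g) : ℕ → Submodule ℝ g
  | 0 => ⊥
  | k + 1 =>
    { carrier := {X : g | (∀ Y : g, ⁅X, Y⁆ ∈ aSeries Jc k) ∧ (∀ Y : g, ⁅Jc.J X, Y⁆ ∈ aSeries Jc k)}
      add_mem' := fun ha hb => by
        refine ⟨fun Y => ?_, fun Y => ?_⟩
        · rw [add_lie]; exact Submodule.add_mem _ (ha.1 Y) (hb.1 Y)
        · rw [map_add, add_lie]; exact Submodule.add_mem _ (ha.2 Y) (hb.2 Y)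
      zero_mem' := by
        refine ⟨fun Y => ?_, fun Y => ?_⟩
        · rw [zero_lie]; exact Submodule.zero_mem _
        · rw [map_zero, zero_lie]; exact Submodule.zero_mem _
      smul_mem' := fun c x hx => by
        refine ⟨fun Y => ?_, fun Y => ?_⟩
        · rw [smul_lie]; exact Submodule.smul_mem _ c (hx.1 Y)
        · rw [map_smul, smul_lie]; exact Submodule.smul_mem _ c (hx.2 Y) }

/-- Quasi-nilpotent complex structure: `a₁(J) ≠ 0`. -/
def IsQuasiNilpotent (Jc : ComplexStructure g) : Prop := Jc.aSeries 1 ≠ ⊥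

/-- Strongly non-nilpotent complex structure: `a₁(J) = 0`. -/
def IsSnN (Jc : ComplexStructure g) : Prop := Jc.aSeries 1 = ⊥

/-- Weakly non-nilpotent complex structure: `a₁(J) ≠ 0` and the ascending compatible series
stabilizes strictly below `g`. -/
def IsWnN (Jc : ComplexStructure g) : Prop :=
  Jc.aSeries 1 ≠ ⊥ ∧ ∃ t : ℕ, Jc.aSeries t ≠ ⊤ ∧ ∀ l : ℕ, 1 ≤ l → Jc.aSeries (t + l) = Jc.aSeries t

/-- Non-nilpotent complex structure: the ascending compatible series never reaches `g`. -/
def IsNonNilpotent (Jc : ComplexStructure g) : Prop := ∀ t : ℕ, Jc.aSeries t ≠ ⊤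

/-- Equivalence of complex structures. -/
def Equiv (Jc : ComplexStructure g) (Jc' : ComplexStructure g') : Prop :=
  ∃ f : g ≃ₗ⁅ℝ⁆ g', ∀ X : g, f (Jc.J X) = Jc'.J (f X)

end ComplexStructure


/-- Complex conjugate of a complex-valued form. -/
def cF {M : Type*} (α : M → ℂ) : M → ℂ := fun X => (starRingEnd ℂ) (α X)

/-- Wedge product of two 1-forms, as a 2-form. -/
def w2 {M R : Type*} [CommRing R] (α β : M → R) (X Y : M) : R := α X * β Y - α Y * β X

/-- Wedge product of three 1-forms, as a 3-form. -/
def w3 {M R : Type*} [CommRing R] (α β γ : M → R) (X Y Z : M) : R :=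
  α X * w2 β γ Y Z - α Y * w2 β γ X Z + α Z * w2 β γ X Y

/-- Wedge product of four 1-forms, as a 4-form. -/
def w4 {M R : Type*} [CommRing R] (α β γ η : M → R) (W X Y Z : M) : R :=
  α W * w3 β γ η X Y Z - α X * w3 β γ η W Y Z + α Y * w3 β γ η W X Z - α Z * w3 β γ η W X Y

/-- Chevalley–Eilenberg differential of a 1-form: `dα(X,Y) = -α([X,Y])`. -/
def dd {g R : Type*} [LieRing g] [CommRing R] (α : g → R) (X Y : g) : R := -α ⁅X, Y⁆

variable {g : Type*} [LieRing g] [LieAlgebra ℝ g]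

/-- `ω` is a basis of (1,0)-forms for `(g,J)` (here `dim ℝ g = 8`): each `ω k` is of bidegree
(1,0) for `J`, and the joint map `g → ℂ⁴` is bijective (so that `{ω^k, ω̄^k}` is a basis of the
complexified dual). -/
def Is10Basis (Jc : ComplexStructure g) (ω : Fin 4 → (g →ₗ[ℝ] ℂ)) : Prop :=
  (∀ (k : Fin 4) (X : g), ω k (Jc.J X) = Complex.I * ω k X) ∧
  Function.Bijective (fun (X : g) (k : Fin 4) => ω k X)

/-- The complex structure equations (★):
`dω¹ = 0`, `dω² = ω¹³ + ω^{1 3̄}`, `dω³ = iε ω^{1 1̄} + iδ ω^{1 2̄} − iδ ω^{2 1̄}`,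
`dω⁴ = A ω¹² + B ω^{1 1̄} + ν (ω²³ + 2δε ω^{1 3̄} + ω^{2 3̄})`. -/
def StarEq (ω : Fin 4 → (g →ₗ[ℝ] ℂ)) (ε δ ν : ℝ) (A B : ℂ) : Prop :=
  (∀ X Y : g, dd (⇑(ω 0)) X Y = 0) ∧
  (∀ X Y : g, dd (⇑(ω 1)) X Y = w2 (⇑(ω 0)) (⇑(ω 2)) X Y + w2 (⇑(ω 0)) (cF ⇑(ω 2)) X Y) ∧
  (∀ X Y : g, dd (⇑(ω 2)) X Y
      = Complex.I * (ε : ℂ) * w2 (⇑(ω 0)) (cF ⇑(ω 0)) X Y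
        + Complex.I * (δ : ℂ) * w2 (⇑(ω 0)) (cF ⇑(ω 1)) X Y
        - Complex.I * (δ : ℂ) * w2 (⇑(ω 1)) (cF ⇑(ω 0)) X Y) ∧
  (∀ X Y : g, dd (⇑(ω 3)) X Y
      = A * w2 (⇑(ω 0)) (⇑(ω 1)) X Y + B * w2 (⇑(ω 0)) (cF ⇑(ω 0)) X Y
        + (ν : ℂ) * (w2 (⇑(ω 1)) (⇑(ω 2)) X Y
            + 2 * (δ : ℂ) * (ε : ℂ) * w2 (⇑(ω 0)) (cF ⇑(ω 2)) X Y
            + w2 (⇑(ω 1)) (cF ⇑(ω 2)) X Y))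

/-- The admissible range of the parameters `(ε,δ,ν,a,B)` in Theorem 3.1. -/
def Admissible (ε δ ν a : ℝ) (B : ℂ) : Prop :=
  (ε = 0 ∨ ε = 1) ∧ (δ = 1 ∨ δ = -1) ∧
  ((ν = 0 ∧ a = 0 ∧ B = 0) ∨
   (ν = 0 ∧ a = 0 ∧ B = 1) ∨
   ((ν = 0 ∨ ν = 1) ∧ a = 1 - ν ∧ (∃ b : ℝ, 0 ≤ b ∧ B = (b : ℂ)) ∧
      (ε = 0 → (B = 0 ∨ B = 1))) ∨
   (ν = 1 ∧ 0 < a ∧ (ε = 0 → (a = 1 ∧ 0 ≤ B.im))))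

/-- A pseudo-Kähler structure on `(g,J)`: a closed, `J`-invariant, nondegenerate 2-form. -/
structure PseudoKahlerForm (Jc : ComplexStructure g) where
  F : g →ₗ[ℝ] g →ₗ[ℝ] ℝ
  antisymm : ∀ X Y : g, F X Y = -F Y X
  compat : ∀ X Y : g, F (Jc.J X) (Jc.J Y) = F X Y
  closed : ∀ X Y Z : g, F ⁅X, Y⁆ Z - F ⁅X, Z⁆ Y + F ⁅Y, Z⁆ X = 0
  nondeg : ∀ X : g, (∀ Y : g, F X Y = 0) → X = 0


variable {g : Type*} [LieRing g] [LieAlgebra ℝ g] in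
/-- The admissible parameters `(a,B)` for pseudo-Kähler WnN structures in Theorem 5.1 i). -/
def PKParam (a : ℝ) (B : ℂ) : Prop := (a = 0 ∧ (B = 0 ∨ B = 1)) ∨ (a = 1 ∧ 0 ≤ B.im)

variable {g : Type*} [LieRing g] [LieAlgebra ℝ g] in
/-- The structure equations (5.2) of a pseudo-Kähler WnN complex structure:
`dω¹ = 0`, `dω² = ω¹³ + ω^{1 3̄}`, `dω³ = iδ(ω^{1 2̄} − ω^{2 1̄})`,
`dω⁴ = a ω¹² + ω²³ + B ω^{1 1̄} + ω^{2 3̄}`; this is (★) with `ε = 0`, `ν = 1`. -/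
def PKStarEq (ω : Fin 4 → (g →ₗ[ℝ] ℂ)) (δ a : ℝ) (B : ℂ) : Prop :=
  StarEq ω 0 δ 1 (a : ℂ) B

variable {g : Type*} [LieRing g] [LieAlgebra ℝ g] in
/-- The fundamental form
`F = iu ω^{1 1̄} − is ω^{2 2̄} − iδr ω^{3 3̄} + v ω^{1 2̄} − v ω^{2 1̄} + iaδ(r−is) ω^{1 3̄}
   + iaδ(r+is) ω^{3 1̄} + (r+is) ω^{1 4̄} − (r−is) ω^{4 1̄}` of Theorem 5.1 i). -/
def pkFundForm (ω : Fin 4 → (g →ₗ[ℝ] ℂ)) (δ a r s u v : ℝ) (X Y : g) : ℂ :=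
  Complex.I * (u : ℂ) * w2 (⇑(ω 0)) (cF ⇑(ω 0)) X Y
  - Complex.I * (s : ℂ) * w2 (⇑(ω 1)) (cF ⇑(ω 1)) X Y
  - Complex.I * (δ : ℂ) * (r : ℂ) * w2 (⇑(ω 2)) (cF ⇑(ω 2)) X Y
  + (v : ℂ) * w2 (⇑(ω 0)) (cF ⇑(ω 1)) X Y
  - (v : ℂ) * w2 (⇑(ω 1)) (cF ⇑(ω 0)) X Y
  + Complex.I * (a : ℂ) * (δ : ℂ) * ((r : ℂ) - Complex.I * (s : ℂ))
      * w2 (⇑(ω 0)) (cF ⇑(ω 2)) X Y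
  + Complex.I * (a : ℂ) * (δ : ℂ) * ((r : ℂ) + Complex.I * (s : ℂ))
      * w2 (⇑(ω 2)) (cF ⇑(ω 0)) X Y
  + ((r : ℂ) + Complex.I * (s : ℂ)) * w2 (⇑(ω 0)) (cF ⇑(ω 3)) X Y
  - ((r : ℂ) - Complex.I * (s : ℂ)) * w2 (⇑(ω 3)) (cF ⇑(ω 0)) X Y

variable {g : Type*} [LieRing g] [LieAlgebra ℝ g] in
/-- The structure equations of Family I of SnN complex structures in dimension 8:
`dω¹ = 0`, `dω² = ε ω^{1 1̄}`, `dω³ = ω¹⁴ + ω^{1 4̄} + a ω^{2 1̄} + iδεb ω^{1 2̄}`,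
`dω⁴ = iν ω^{1 1̄} + b ω^{2 2̄} + iδ(ω^{1 3̄} − ω^{3 1̄})`. -/
def FamilyIEq (ω : Fin 4 → (g →ₗ[ℝ] ℂ)) (ε δ ν a b : ℝ) : Prop :=
  (∀ X Y : g, dd (⇑(ω 0)) X Y = 0) ∧
  (∀ X Y : g, dd (⇑(ω 1)) X Y = (ε : ℂ) * w2 (⇑(ω 0)) (cF ⇑(ω 0)) X Y) ∧
  (∀ X Y : g, dd (⇑(ω 2)) X Y
      = w2 (⇑(ω 0)) (⇑(ω 3)) X Y + w2 (⇑(ω 0)) (cF ⇑(ω 3)) X Y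
        + (a : ℂ) * w2 (⇑(ω 1)) (cF ⇑(ω 0)) X Y
        + Complex.I * (δ : ℂ) * (ε : ℂ) * (b : ℂ) * w2 (⇑(ω 0)) (cF ⇑(ω 1)) X Y) ∧
  (∀ X Y : g, dd (⇑(ω 3)) X Y
      = Complex.I * (ν : ℂ) * w2 (⇑(ω 0)) (cF ⇑(ω 0)) X Y
        + (b : ℂ) * w2 (⇑(ω 1)) (cF ⇑(ω 1)) X Y
        + Complex.I * (δ : ℂ)
            * (w2 (⇑(ω 0)) (cF ⇑(ω 2)) X Y - w2 (⇑(ω 2)) (cF ⇑(ω 0)) X Y))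

/-- (Part of the proof of Theorem 5.1): no SnN complex structure in Family I admits a
pseudo-Kähler structure. -/
theorem familyI_no_pseudoKahler
    {g : Type*} [LieRing g] [LieAlgebra ℝ g]
    (h8 : Module.finrank ℝ g = 8) (hg : IsNilpotentLie g)
    (Jc : ComplexStructure g) (hsnn : Jc.IsSnN)
    (ω : Fin 4 → (g →ₗ[ℝ] ℂ)) (ε δ ν a b : ℝ)
    (hωb : Is10Basis Jc ω)
    (hδ : δ = 1 ∨ δ = -1) (hε : ε = 0 ∨ ε = 1) (hν : ν = 0 ∨ ν = 1)
    (hab : ¬(a = 0 ∧ b = 0)) (ha : 0 ≤ a)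
    (heq : FamilyIEq ω ε δ ν a b) :
    IsEmpty (PseudoKahlerForm Jc) := by
  refine ⟨fun pk => ?_⟩
  classical
  obtain ⟨hω10, hbij⟩ := hωb
  obtain ⟨hd0, hd1, hd2, hd3⟩ := heq
  let Φ : g →ₗ[ℝ] (Fin 4 → ℂ) := LinearMap.pi ω
  have hbijΦ : Function.Bijective Φ := hbij
  let e : g ≃ₗ[ℝ] (Fin 4 → ℂ) := LinearEquiv.ofBijective Φ hbijΦ
  let B : Fin 4 → g := fun k => e.symm (Pi.single k 1)
  let C : Fin 4 → g := fun k => e.symm (Pi.single k Complex.I)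
  have hval : ∀ (c : Fin 4 → ℂ) (j : Fin 4), ω j (e.symm c) = c j := by
    intro c j
    have h : e (e.symm c) = c := e.apply_symm_apply c
    exact congrFun h j
  have hvalB : ∀ (j k : Fin 4), ω j (B k) = (Pi.single k 1 : Fin 4 → ℂ) j := by
    intro j k; exact hval _ j
  have hvalC : ∀ (j k : Fin 4), ω j (C k) = (Pi.single k Complex.I : Fin 4 → ℂ) j := by
    intro j k; exact hval _ j
  have heB : ∀ k, e (B k) = (Pi.single k 1 : Fin 4 → ℂ) := by
    intro k; exact e.apply_symm_apply _
  have hJ : ∀ c : Fin 4 → ℂ, Jc.J (e.symm c) = e.symm (fun j => Complex.I * c j) := by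
    intro c
    apply e.injective
    rw [e.apply_symm_apply]
    funext j
    show ω j (Jc.J (e.symm c)) = Complex.I * c j
    rw [hω10 j, hval]
  have hJB : ∀ k, Jc.J (B k) = C k := by
    intro k
    rw [hJ]
    congr 1
    funext j
    by_cases h : j = k <;> simp [Pi.single_apply, h]
  have hCC : ∀ p q, pk.F (C p) (C q) = pk.F (B p) (B q) := by
    intro p q
    rw [← hJB, ← hJB, pk.compat]
  have hCB : ∀ p q, pk.F (C p) (B q) = -pk.F (B p) (C q) := by
    intro p q
    have h := pk.compat (B p) (C q)
    have h2 : Jc.J (C q) = -B q := by rw [← hJB q, Jc.j_sq]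
    rw [hJB p, h2, map_neg] at h
    linarith
  have hBCs : ∀ p q, pk.F (B p) (C q) = pk.F (B q) (C p) := by
    intro p q
    have h1 := pk.antisymm (B p) (C q)
    have h2 := hCB q p
    linarith
  -- bracket coordinates
  have hb0 : ∀ X Y : g, (ω 0) ⁅X, Y⁆ = 0 := by
    intro X Y
    have h := hd0 X Y
    simp only [dd, neg_eq_zero] at h
    exact h
  have hb1 : ∀ X Y : g, (ω 1) ⁅X, Y⁆ = -((ε : ℂ) * w2 (⇑(ω 0)) (cF ⇑(ω 0)) X Y) := by
    intro X Y
    have h := hd1 X Y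
    simp only [dd] at h
    linear_combination -h
  have hb2 : ∀ X Y : g, (ω 2) ⁅X, Y⁆
      = -(w2 (⇑(ω 0)) (⇑(ω 3)) X Y + w2 (⇑(ω 0)) (cF ⇑(ω 3)) X Y
        + (a : ℂ) * w2 (⇑(ω 1)) (cF ⇑(ω 0)) X Y
        + Complex.I * (δ : ℂ) * (ε : ℂ) * (b : ℂ) * w2 (⇑(ω 0)) (cF ⇑(ω 1)) X Y) := by
    intro X Y
    have h := hd2 X Y
    simp only [dd] at h
    linear_combination -h
  have hb3 : ∀ X Y : g, (ω 3) ⁅X, Y⁆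
      = -(Complex.I * (ν : ℂ) * w2 (⇑(ω 0)) (cF ⇑(ω 0)) X Y
        + (b : ℂ) * w2 (⇑(ω 1)) (cF ⇑(ω 1)) X Y
        + Complex.I * (δ : ℂ)
            * (w2 (⇑(ω 0)) (cF ⇑(ω 2)) X Y - w2 (⇑(ω 2)) (cF ⇑(ω 0)) X Y)) := by
    intro X Y
    have h := hd3 X Y
    simp only [dd] at h
    linear_combination -h
  -- decomposition of e.symm c in the basis
  have hdec : ∀ c : Fin 4 → ℂ, e.symm c =
      (c 0).re • B 0 + (c 1).re • B 1 + (c 2).re • B 2 + (c 3).re • B 3 +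
      (c 0).im • C 0 + (c 1).im • C 1 + (c 2).im • C 2 + (c 3).im • C 3 := by
    intro c
    apply e.injective
    rw [e.apply_symm_apply]
    simp only [map_add, map_smul, e.apply_symm_apply]
    funext j
    simp only [Pi.add_apply, Pi.smul_apply]
    fin_cases j <;>
      simp [Pi.single_apply, Complex.real_smul, B, C]
  have key : ∀ X Y Z : g, pk.F ⁅X, Y⁆ Z =
      ((ω 0) ⁅X, Y⁆).re * pk.F (B 0) Z + ((ω 1) ⁅X, Y⁆).re * pk.F (B 1) Z
      + ((ω 2) ⁅X, Y⁆).re * pk.F (B 2) Z + ((ω 3) ⁅X, Y⁆).re * pk.F (B 3) Z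
      + ((ω 0) ⁅X, Y⁆).im * pk.F (C 0) Z + ((ω 1) ⁅X, Y⁆).im * pk.F (C 1) Z
      + ((ω 2) ⁅X, Y⁆).im * pk.F (C 2) Z + ((ω 3) ⁅X, Y⁆).im * pk.F (C 3) Z := by
    intro X Y Z
    have hXY : ⁅X, Y⁆ = e.symm (fun j => ω j ⁅X, Y⁆) := (e.symm_apply_apply ⁅X, Y⁆).symm
    conv_lhs => rw [hXY, hdec]
    simp only [map_add, map_smul, LinearMap.add_apply, LinearMap.smul_apply, smul_eq_mul]
  have E1 := pk.closed (B 0) (B 3) (C 3)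
  simp only [key, hb0, hb1, hb2, hb3, w2, cF, hvalB, hvalC] at E1
  simp only [Pi.single_apply] at E1
  simp [hCC, hCB] at E1
  have E2 := pk.closed (C 0) (B 3) (C 3)
  simp only [key, hb0, hb1, hb2, hb3, w2, cF, hvalB, hvalC] at E2
  simp only [Pi.single_apply] at E2
  simp [hCC, hCB] at E2
  have E3 := pk.closed (B 0) (B 3) (B 2)
  simp only [key, hb0, hb1, hb2, hb3, w2, cF, hvalB, hvalC] at E3
  simp only [Pi.single_apply] at E3
  simp [hCC, hCB] at E3
  have E4 := pk.closed (B 0) (B 3) (C 2)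
  simp only [key, hb0, hb1, hb2, hb3, w2, cF, hvalB, hvalC] at E4
  simp only [Pi.single_apply] at E4
  simp [hCC, hCB] at E4
  have E5 := pk.closed (B 0) (B 1) (B 2)
  simp only [key, hb0, hb1, hb2, hb3, w2, cF, hvalB, hvalC] at E5
  simp only [Pi.single_apply] at E5
  simp [hCC, hCB] at E5
  have E6 := pk.closed (B 0) (C 1) (B 2)
  simp only [key, hb0, hb1, hb2, hb3, w2, cF, hvalB, hvalC] at E6
  simp only [Pi.single_apply] at E6
  simp [hCC, hCB] at E6
  have E7 := pk.closed (B 0) (B 3) (B 1)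
  simp only [key, hb0, hb1, hb2, hb3, w2, cF, hvalB, hvalC] at E7
  simp only [Pi.single_apply] at E7
  simp [hCC, hCB] at E7
  have E8 := pk.closed (B 0) (B 3) (C 1)
  simp only [key, hb0, hb1, hb2, hb3, w2, cF, hvalB, hvalC] at E8
  simp only [Pi.single_apply] at E8
  simp [hCC, hCB] at E8
  have E9 := pk.closed (B 0) (B 2) (C 0)
  simp only [key, hb0, hb1, hb2, hb3, w2, cF, hvalB, hvalC] at E9
  simp only [Pi.single_apply] at E9
  simp [hCC, hCB] at E9
  have E10 := pk.closed (B 0) (C 2) (C 0)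
  simp only [key, hb0, hb1, hb2, hb3, w2, cF, hvalB, hvalC] at E10
  simp only [Pi.single_apply] at E10
  simp [hCC, hCB] at E10
  have hδ2 : δ * δ = 1 := by rcases hδ with h | h <;> rw [h] <;> norm_num
  have hz22 : pk.F (B 2) (B 2) = 0 := by linarith [pk.antisymm (B 2) (B 2)]
  have hz33 : pk.F (B 3) (B 3) = 0 := by linarith [pk.antisymm (B 3) (B 3)]
  have hR23 : pk.F (B 2) (C 3) = 0 := E1
  have hP23 : pk.F (B 2) (B 3) = 0 := E2
  have hR33 : pk.F (B 3) (C 3) = 0 := by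
    linear_combination (-(δ/2)) * E3 + (-(pk.F (B 3) (C 3))) * hδ2 + (-δ) * hz22
  have hR22 : pk.F (B 2) (C 2) = 0 := E4
  have hR13 : pk.F (B 3) (C 1) = 0 := by
    linear_combination (-(δ/2)) * E5 + (-(pk.F (B 3) (C 1))) * hδ2
      + (δ*a/2) * hz22 + (δ*δ*ε*b/2) * hR22
  have hP13 : pk.F (B 3) (B 1) = 0 := by
    linear_combination (δ/2) * E6 + (-(pk.F (B 3) (B 1))) * hδ2
      + (δ*δ*ε*b/2) * hz22 + (δ*a/2) * hR22
  have hP12 : pk.F (B 2) (B 1) = 0 := by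
    linear_combination (-(1/2 : ℝ)) * E7 + (-(a/2)) * hP23 + (-(δ*ε*b/2)) * hR23
  have hR12 : pk.F (B 2) (C 1) = 0 := by
    linear_combination (-(1/2 : ℝ)) * E8 + (δ*ε*b/2) * hP23 + (a/2) * hR23
  have h32 : pk.F (B 3) (B 2) = 0 := by rw [pk.antisymm (B 3) (B 2), hP23, neg_zero]
  have h12 : pk.F (B 1) (C 2) = 0 := by rw [hBCs 1 2, hR12]
  have hP03 : pk.F (B 3) (B 0) = 0 := by
    linear_combination (-(δ/2)) * E9 + (-(pk.F (B 3) (B 0))) * hδ2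
      + (δ*ν) * h32 + (δ*ε) * h12
  have h12b : pk.F (B 1) (B 2) = 0 := by rw [pk.antisymm (B 1) (B 2), hP12, neg_zero]
  have h32b : pk.F (B 3) (C 2) = 0 := by rw [hBCs 3 2, hR23]
  have hR03 : pk.F (B 3) (C 0) = 0 := by
    linear_combination (-(δ/2)) * E10 + (-(pk.F (B 3) (C 0))) * hδ2
      + (-(δ*ε)) * h12b + (δ*ν) * h32b
  have hdeg : ∀ Y : g, pk.F (B 3) Y = 0 := by
    intro Y
    have h := hdec (e Y)
    rw [e.symm_apply_apply] at h
    conv_lhs => rw [h]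
    simp [map_add, map_smul, smul_eq_mul, hP03, hP13, h32, hz33, hR03, hR13, h32b, hR33]
  have hB30 : B 3 = 0 := pk.nondeg _ hdeg
  have h1 : e (B 3) = 0 := by rw [hB30, map_zero]
  rw [heB] at h1
  have h2 := congrFun h1 3
  rw [Pi.single_eq_same] at h2
  exact one_ne_zero h2

end Paper
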